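/- Let ε > 0 with 1/ε ∈ ℕ, G_ε the grid {kε : 0 ≤ k ≤ 1/ε}, f : G_ε → ℝ, and suppose the difference quotient Df is uniformly continuous in the sense that for every q > 0 there is δ > 0 with |Df(u) - Df(a)| < q whenever |u - a| < δ. Then for every q > 0 there is δ > 0 such that for all a, x ∈ G_ε with 0 < x - a < δ, |(f(x)-f(a))/(x-a) - Df(a)| < q. -/

import Mathlib

/-- If the difference quotient `Df` of a grid function `f` is uniformly continuous,
then secant slopes over short grid intervals are uniformly close to `Df` at the left
endpoint (Theorem 8.3.1 in standard terms). -/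
theorem stmt_6 (ε : ℝ) (hε : 0 < ε) (N : ℕ) (hN : (N : ℝ) * ε = 1)
    (f Df : ℝ → ℝ)
    (hDf : ∀ k : ℕ, k < N → Df ((k : ℝ) * ε) = (f (((k : ℝ) + 1) * ε) - f ((k : ℝ) * ε)) / ε)
    (hcont : ∀ q > (0 : ℝ), ∃ δ > (0 : ℝ), ∀ j k : ℕ, j < N → k < N →
      |(k : ℝ) * ε - (j : ℝ) * ε| < δ → |Df ((k : ℝ) * ε) - Df ((j : ℝ) * ε)| < q) :
    ∀ q > (0 : ℝ), ∃ δ > (0 : ℝ), ∀ j k : ℕ, j < k → k ≤ N →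
      (k : ℝ) * ε - (j : ℝ) * ε < δ →
      |(f ((k : ℝ) * ε) - f ((j : ℝ) * ε)) / ((k : ℝ) * ε - (j : ℝ) * ε)
          - Df ((j : ℝ) * ε)| < q := by
  intro q hq
  obtain ⟨δ, hδ, h⟩ := hcont q hq
  refine ⟨δ, hδ, ?_⟩
  intro j k hjk hkN hd
  have hjN : j < N := lt_of_lt_of_le hjk hkN
  have hεne : ε ≠ 0 := ne_of_gt hε
  -- telescoping sum
  have tel : ∀ n : ℕ, j ≤ n → n ≤ N →
      f ((n : ℝ) * ε) - f ((j : ℝ) * ε) = ∑ m ∈ Finset.Ico j n, ε * Df ((m : ℝ) * ε) := by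
    intro n hn hnN
    induction n with
    | zero =>
      have : j = 0 := Nat.le_zero.mp hn
      simp [this]
    | succ n ih =>
      rcases eq_or_lt_of_le hn with heq | hlt
      · rw [← heq]
        simp
      · have hjn : j ≤ n := Nat.lt_succ_iff.mp hlt
        have hnN' : n ≤ N := Nat.le_of_succ_le hnN
        have hnltN : n < N := hnN
        rw [Finset.sum_Ico_succ_top hjn, ← ih hjn hnN']
        have hdn : ε * Df ((n : ℝ) * ε) = f (((n : ℝ) + 1) * ε) - f ((n : ℝ) * ε) := by
          rw [hDf n hnltN]; field_simp
        have hcast : ((n + 1 : ℕ) : ℝ) = (n : ℝ) + 1 := by push_cast; ring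
        rw [hcast, hdn]; ring
  set D : ℝ := (k : ℝ) * ε - (j : ℝ) * ε with hDdef
  have hD : 0 < D := by
    have : (j : ℝ) < (k : ℝ) := by exact_mod_cast hjk
    have := sub_pos.mpr (mul_lt_mul_of_pos_right this hε)
    simpa [hDdef] using this
  have hS := tel k hjk.le hkN
  have hDsum : D = ∑ _m ∈ Finset.Ico j k, ε := by
    rw [Finset.sum_const, Nat.card_Ico, nsmul_eq_mul, Nat.cast_sub hjk.le]
    ring
  have hne : (Finset.Ico j k).Nonempty := by
    rw [Finset.nonempty_Ico]; exact hjk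
  -- bound the numerator
  have key : |(∑ m ∈ Finset.Ico j k, ε * Df ((m : ℝ) * ε)) - Df ((j : ℝ) * ε) * D| < q * D := by
    have heq : (∑ m ∈ Finset.Ico j k, ε * Df ((m : ℝ) * ε)) - Df ((j : ℝ) * ε) * D
        = ∑ m ∈ Finset.Ico j k, ε * (Df ((m : ℝ) * ε) - Df ((j : ℝ) * ε)) := by
      rw [hDsum, Finset.mul_sum, ← Finset.sum_sub_distrib]
      exact Finset.sum_congr rfl (fun m _ => by ring)
    rw [heq]
    calc |∑ m ∈ Finset.Ico j k, ε * (Df ((m : ℝ) * ε) - Df ((j : ℝ) * ε))|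
        ≤ ∑ m ∈ Finset.Ico j k, |ε * (Df ((m : ℝ) * ε) - Df ((j : ℝ) * ε))| :=
          Finset.abs_sum_le_sum_abs _ _
      _ < ∑ _m ∈ Finset.Ico j k, ε * q := by
          apply Finset.sum_lt_sum_of_nonempty hne
          intro m hm
          rw [Finset.mem_Ico] at hm
          have hmN : m < N := lt_of_lt_of_le hm.2 hkN
          have hmj : (j : ℝ) * ε ≤ (m : ℝ) * ε := by
            have : (j : ℝ) ≤ (m : ℝ) := by exact_mod_cast hm.1
            exact mul_le_mul_of_nonneg_right this hε.le
          have hdist : |(m : ℝ) * ε - (j : ℝ) * ε| < δ := by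
            rw [abs_of_nonneg (sub_nonneg.mpr hmj)]
            have hmk : (m : ℝ) * ε < (k : ℝ) * ε := by
              have : (m : ℝ) < (k : ℝ) := by exact_mod_cast hm.2
              exact mul_lt_mul_of_pos_right this hε
            linarith
          have := h j m hjN hmN hdist
          rw [abs_mul, abs_of_pos hε]
          exact mul_lt_mul_of_pos_left this hε
      _ = q * D := by
          rw [Finset.sum_const, Nat.card_Ico, nsmul_eq_mul, hDsum, Finset.sum_const,
            Nat.card_Ico, nsmul_eq_mul]
          ring
  rw [div_sub' hD.ne', abs_div, abs_of_pos hD, div_lt_iff₀ hD]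
  calc |f ((k : ℝ) * ε) - f ((j : ℝ) * ε) - D * Df ((j : ℝ) * ε)|
      = |(∑ m ∈ Finset.Ico j k, ε * Df ((m : ℝ) * ε)) - Df ((j : ℝ) * ε) * D| := by
        rw [← hS]; ring_nf
    _ < q * D := key
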